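/- Let M be a τ-rigid module over a finite-dimensional algebra A. Then for any module N, the maximum of ⟨−g_M, dim N₀⟩ over all submodules N₀ of N equals dim_k Hom_A(M, N). -/

import Mathlib

/-- For a τ-rigid module `M` and any module `N`, the maximum of `⟨-g_M, dim N₀⟩` over all
submodules `N₀` of `N` equals `dim_k Hom_A(M, N)`. -/
theorem trop_dual_F_eval_neg_g_eq_hom (n : ℕ) (k A : Type) [Field k] [Ring A] [Algebra k A]
    [FiniteDimensional k A]
    (M : Type) [AddCommGroup M] [Module A M] [Module k M] [IsScalarTower k A M]
    [FiniteDimensional k M] [SMulCommClass A k M]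
    (τM : Type) [AddCommGroup τM] [Module A τM] [Module k τM] [IsScalarTower k A τM]
    [FiniteDimensional k τM] [SMulCommClass A k τM]
    (N : Type) [AddCommGroup N] [Module A N] [Module k N] [IsScalarTower k A N]
    [FiniteDimensional k N] [SMulCommClass A k N]
    (dimVec : (X : Type) → [AddCommGroup X] → [Module A X] → Fin n → ℕ)
    (gM : Fin n → ℤ)
    -- the Auslander–Reiten formula characterizing the g-vector of M
    (hAR : ∀ (X : Type) [AddCommGroup X] [Module A X] [Module k X] [IsScalarTower k A X]
        [FiniteDimensional k X] [SMulCommClass A k X],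
      (∑ i, gM i * (dimVec X i : ℤ)) =
        (Module.finrank k (X →ₗ[A] τM) : ℤ) - (Module.finrank k (M →ₗ[A] X) : ℤ))
    -- M is τ-rigid
    (hrigid : ∀ f : M →ₗ[A] τM, f = 0) :
    IsGreatest {x : ℤ | ∃ S : Submodule A N, x = ∑ i, (-gM i) * (dimVec S i : ℤ)}
      (Module.finrank k (M →ₗ[A] N) : ℤ) := by
  have iC : ∀ S : Submodule A N, SMulCommClass A k S :=
    fun S => ⟨fun a c x => Subtype.ext (smul_comm a c (x : N))⟩
  have iF : ∀ S : Submodule A N, FiniteDimensional k S :=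
    fun S => FiniteDimensional.finiteDimensional_submodule (S.restrictScalars k)
  have key : ∀ S : Submodule A N,
      (∑ i, (-gM i) * (dimVec S i : ℤ)) =
        (Module.finrank k (M →ₗ[A] S) : ℤ) - (Module.finrank k (S →ₗ[A] τM) : ℤ) := by
    intro S
    letI := iC S; letI := iF S
    have h := hAR S
    have h2 : ∑ i, (-gM i) * (dimVec S i : ℤ) = -∑ i, gM i * (dimVec S i : ℤ) := by
      rw [← Finset.sum_neg_distrib]
      exact Finset.sum_congr rfl fun i _ => neg_mul _ _
    rw [h2, h]; ring
  constructor
  · -- membership: attained at the trace submodule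
    set T : Submodule A N := ⨆ f : M →ₗ[A] N, LinearMap.range f with hT
    letI := iC T; letI := iF T
    have hmem : ∀ (f : M →ₗ[A] N) (m : M), f m ∈ T :=
      fun f m => Submodule.mem_iSup_of_mem f ⟨m, rfl⟩
    -- Hom(T, τM) = 0
    have hv : ∀ g : T →ₗ[A] τM, g = 0 := by
      intro g
      have hz : ∀ (x : N) (hx : x ∈ T), g ⟨x, hx⟩ = 0 := by
        intro x hx
        refine Submodule.iSup_induction' (motive := fun y hy => g ⟨y, hy⟩ = 0)
          (p := fun f : M →ₗ[A] N => LinearMap.range f) ?_ ?_ ?_ hx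
        · rintro f y ⟨m, rfl⟩
          have h0 : g.comp (f.codRestrict T (hmem f)) = 0 := hrigid _
          exact congrFun (congrArg DFunLike.coe h0) m
        · exact map_zero g
        · intro y z hy hz hgy hgz
          have : (⟨y + z, add_mem hy hz⟩ : T) = ⟨y, hy⟩ + ⟨z, hz⟩ := rfl
          rw [this, map_add, hgy, hgz, add_zero]
      ext x
      exact hz x.1 x.2
    have hsub : Subsingleton (T →ₗ[A] τM) :=
      ⟨fun a b => (hv a).trans (hv b).symm⟩
    have hr0 : Module.finrank k (T →ₗ[A] τM) = 0 := by
      letI := hsub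
      exact Module.finrank_zero_of_subsingleton
    -- Hom(M, T) ≃ Hom(M, N)
    have e : (M →ₗ[A] T) ≃ₗ[k] (M →ₗ[A] N) :=
      { toFun := fun f => T.subtype.comp f
        invFun := fun f => f.codRestrict T (hmem f)
        map_add' := fun f g => by ext m; rfl
        map_smul' := fun c f => by ext m; rfl
        left_inv := fun f => by ext m; rfl
        right_inv := fun f => by ext m; rfl }
    refine ⟨T, ?_⟩
    rw [key T, hr0, e.finrank_eq]
    simp
  · -- upper bound
    rintro x ⟨S, rfl⟩
    letI := iC S; letI := iF S
    rw [key S]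
    let φ : (M →ₗ[A] S) →ₗ[k] (M →ₗ[A] N) :=
      { toFun := fun f => S.subtype.comp f
        map_add' := fun f g => by ext m; rfl
        map_smul' := fun c f => by ext m; rfl }
    have hφ : Function.Injective φ := by
      intro f g hfg
      ext m
      exact congrFun (congrArg DFunLike.coe hfg) m
    have h1 : Module.finrank k (M →ₗ[A] S) ≤ Module.finrank k (M →ₗ[A] N) :=
      LinearMap.finrank_le_finrank_of_injective hφ
    have h2 : (0 : ℤ) ≤ (Module.finrank k (S →ₗ[A] τM) : ℤ) := Int.natCast_nonneg _
    omega
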